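/- Let N be a positive integer. Suppose we are given a commutative diagram of abelian groups with exact rows 0 → T → A → B → 0 and 0 → T' → A' → B' → 0, with vertical homomorphisms T → T', A → A', B → B'. If the induced map on N-torsion subgroups B[N] → B'[N] is surjective, and the induced maps T/NT → T'/NT' and B/NB → B'/NB' are isomorphisms, then the induced map A/NA → A'/NA' is an isomorphism. -/

import Mathlib

/-- The quotient of an abelian group by the subgroup of `N`-th multiples. -/
abbrev ModNQuot (N : ℕ) (A : Type*) [AddCommGroup A] : Type _ :=
  A ⧸ (zsmulAddGroupHom (N : ℤ) : A →+ A).range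

/-- The map `A/NA → B/NB` induced by a homomorphism `f : A →+ B`. -/
noncomputable def mapModN (N : ℕ) {A B : Type*} [AddCommGroup A] [AddCommGroup B]
    (f : A →+ B) : ModNQuot N A →+ ModNQuot N B :=
  QuotientAddGroup.map _ _ f (by
    rintro x ⟨a, rfl⟩
    exact ⟨f a, (map_zsmul f _ _).symm⟩)

private lemma modN_mk_eq_zero_iff {N : ℕ} {G : Type*} [AddCommGroup G] (x : G) :
    (QuotientAddGroup.mk x : ModNQuot N G) = 0 ↔ ∃ g : G, (N : ℤ) • g = x := by
  rw [QuotientAddGroup.eq_zero_iff]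
  exact Iff.rfl

private lemma modN_mk_eq_iff {N : ℕ} {G : Type*} [AddCommGroup G] (x y : G) :
    (QuotientAddGroup.mk x : ModNQuot N G) = QuotientAddGroup.mk y ↔
      ∃ g : G, (N : ℤ) • g = x - y := by
  rw [QuotientAddGroup.eq_iff_sub_mem]
  exact Iff.rfl

private lemma mapModN_mk {N : ℕ} {A B : Type*} [AddCommGroup A] [AddCommGroup B]
    (f : A →+ B) (a : A) :
    mapModN N f (QuotientAddGroup.mk a) = QuotientAddGroup.mk (f a) := rfl

/-- The `N`-torsion five-lemma core of the reduction-mod-`N` lemma. -/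
theorem stmt0 (N : ℕ) (hN : 0 < N)
    {T A B T' A' B' : Type*}
    [AddCommGroup T] [AddCommGroup A] [AddCommGroup B]
    [AddCommGroup T'] [AddCommGroup A'] [AddCommGroup B']
    (fT : T →+ A) (gA : A →+ B) (fT' : T' →+ A') (gA' : A' →+ B')
    (u : T →+ T') (v : A →+ A') (w : B →+ B')
    (hfT : Function.Injective fT) (hgA : Function.Surjective gA)
    (hex : fT.range = gA.ker)
    (hfT' : Function.Injective fT') (hgA' : Function.Surjective gA')
    (hex' : fT'.range = gA'.ker)
    (hc1 : v.comp fT = fT'.comp u) (hc2 : w.comp gA = gA'.comp v)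
    (htors : ∀ b' : B', N • b' = 0 → ∃ b : B, N • b = 0 ∧ w b = b')
    (hu : Function.Bijective (mapModN N u))
    (hw : Function.Bijective (mapModN N w)) :
    Function.Bijective (mapModN N v) := by
  have hc1' : ∀ t : T, v (fT t) = fT' (u t) := fun t => DFunLike.congr_fun hc1 t
  have hc2' : ∀ a : A, w (gA a) = gA' (v a) := fun a => DFunLike.congr_fun hc2 a
  have hker : ∀ a : A, gA a = 0 → ∃ t : T, fT t = a := by
    intro a ha
    have : a ∈ fT.range := hex ▸ AddMonoidHom.mem_ker.mpr ha
    exact this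
  have hker' : ∀ a' : A', gA' a' = 0 → ∃ t' : T', fT' t' = a' := by
    intro a ha
    have : a ∈ fT'.range := hex' ▸ AddMonoidHom.mem_ker.mpr ha
    exact this
  have hrk' : ∀ t' : T', gA' (fT' t') = 0 := by
    intro t'
    have : fT' t' ∈ fT'.range := ⟨t', rfl⟩
    rw [hex'] at this
    exact this
  constructor
  · -- injectivity
    rw [injective_iff_map_eq_zero]
    intro x
    refine QuotientAddGroup.induction_on x ?_
    intro a ha
    rw [mapModN_mk, modN_mk_eq_zero_iff] at ha
    obtain ⟨a', ha'⟩ := ha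
    -- step 1: gA a is divisible by N
    have h1 : (QuotientAddGroup.mk (gA a) : ModNQuot N B) = 0 := by
      apply hw.injective
      rw [map_zero, mapModN_mk, modN_mk_eq_zero_iff]
      exact ⟨gA' a', by rw [← map_zsmul, ha', hc2']⟩
    rw [modN_mk_eq_zero_iff] at h1
    obtain ⟨b, hb⟩ := h1
    obtain ⟨a₀, ha₀⟩ := hgA b
    -- step 2: a - N a₀ comes from T
    obtain ⟨t, ht⟩ := hker (a - (N : ℤ) • a₀) (by
      rw [map_sub, map_zsmul, ha₀, hb, sub_self])
    -- step 3
    have h3 : fT' (u t) = (N : ℤ) • (a' - v a₀) := by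
      rw [← hc1', ht, map_sub, map_zsmul, smul_sub, ← ha']
    -- step 4: gA' (a' - v a₀) is N-torsion
    have h4 : N • gA' (a' - v a₀) = 0 := by
      have := congrArg gA' h3
      rw [hrk', map_zsmul] at this
      rw [← natCast_zsmul]
      exact this.symm
    obtain ⟨b₁, hb₁, hwb₁⟩ := htors _ h4
    obtain ⟨a₁, ha₁⟩ := hgA b₁
    obtain ⟨t₁, ht₁⟩ := hker ((N : ℤ) • a₁) (by
      rw [map_zsmul, ha₁, natCast_zsmul, hb₁])
    -- step 6
    obtain ⟨t₂, ht₂⟩ := hker' (a' - v a₀ - v a₁) (by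
      rw [map_sub, ← hc2', ha₁, hwb₁, sub_self])
    -- step 7
    have h7 : u t = u t₁ + (N : ℤ) • t₂ := by
      apply hfT'
      rw [map_add, map_zsmul, h3, ← hc1', ht₁, map_zsmul, ht₂, ← smul_add]
      congr 1
      abel
    -- step 8
    have h8 : (QuotientAddGroup.mk t : ModNQuot N T) = QuotientAddGroup.mk t₁ := by
      apply hu.injective
      rw [mapModN_mk, mapModN_mk, modN_mk_eq_iff]
      exact ⟨t₂, by rw [h7]; abel⟩
    rw [modN_mk_eq_iff] at h8
    obtain ⟨t₀, ht₀⟩ := h8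
    -- conclude
    rw [modN_mk_eq_zero_iff]
    refine ⟨a₀ + a₁ + fT t₀, ?_⟩
    have : fT t = fT t₁ + (N : ℤ) • fT t₀ := by
      rw [← map_zsmul, ← map_add, ht₀]
      congr 1
      abel
    have ha : a = (N : ℤ) • a₀ + fT t := by rw [ht]; abel
    rw [ha, this, ht₁, smul_add, smul_add]
    abel
  · -- surjectivity
    intro y
    refine QuotientAddGroup.induction_on y ?_
    intro a'
    obtain ⟨x, hx⟩ := hw.surjective (QuotientAddGroup.mk (gA' a'))
    revert hx
    refine QuotientAddGroup.induction_on x ?_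
    intro b hb
    rw [mapModN_mk, modN_mk_eq_iff] at hb
    obtain ⟨c, hc⟩ := hb
    obtain ⟨a, ha⟩ := hgA b
    obtain ⟨a₁', ha₁'⟩ := hgA' c
    obtain ⟨t', ht'⟩ := hker' (v a - a' - (N : ℤ) • a₁') (by
      rw [map_sub, map_sub, map_zsmul, ha₁', ← hc2', ha, hc]
      abel)
    obtain ⟨z, hz⟩ := hu.surjective (QuotientAddGroup.mk t')
    revert hz
    refine QuotientAddGroup.induction_on z ?_
    intro t ht
    rw [mapModN_mk, modN_mk_eq_iff] at ht
    obtain ⟨s, hs⟩ := ht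
    refine ⟨QuotientAddGroup.mk (a - fT t), ?_⟩
    rw [mapModN_mk, modN_mk_eq_iff]
    refine ⟨a₁' - fT' s, ?_⟩
    have hut : u t = t' + (N : ℤ) • s := by rw [hs]; abel
    rw [map_sub, hc1', hut, map_add, map_zsmul, ht', smul_sub]
    abel
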